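/- For every n > 3 and every 2-AND-OR-BN F on n nodes, there exist three pairwise distinct states x¹, x², x³ : Fin n → Bool with F x¹ = F x² = F x³; equivalently, some state a : Fin n → Bool has at least 3 preimages under F. -/
import Mathlib


/-- `F` is a `K`-AND-OR-BN: each local function is the AND or the OR of `K` literals
on pairwise distinct variables (a literal is `x_{i_j} XOR b_j`). -/
def isAndOrBN {n : ℕ} (K : ℕ) (F : (Fin n → Bool) → (Fin n → Bool)) : Prop :=
  ∀ i : Fin n, ∃ idx : Fin K → Fin n, Function.Injective idx ∧ ∃ b : Fin K → Bool,
    (∀ x, F x i = Finset.univ.inf (fun j => Bool.xor (x (idx j)) (b j))) ∨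
    (∀ x, F x i = Finset.univ.sup (fun j => Bool.xor (x (idx j)) (b j)))

namespace ThreeImagesAux

open Finset

/-- `(-1)^b` as a rational number. -/
def sgn (b : Bool) : ℚ := if b then -1 else 1

lemma sgn_not (b : Bool) : sgn (!b) = - sgn b := by cases b <;> simp [sgn]

lemma sgn_sq (b : Bool) : sgn b * sgn b = 1 := by cases b <;> simp [sgn]

lemma inf_fin_two (g : Fin 2 → Bool) : Finset.univ.inf g = (g 0 && g 1) := by
  have h : (Finset.univ : Finset (Fin 2)) = {0, 1} := by decide
  rw [h, Finset.inf_insert, Finset.inf_singleton]; rfl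

lemma sup_fin_two (g : Fin 2 → Bool) : Finset.univ.sup g = (g 0 || g 1) := by
  have h : (Finset.univ : Finset (Fin 2)) = {0, 1} := by decide
  rw [h, Finset.sup_insert, Finset.sup_singleton]; rfl

lemma sum_flip {n : ℕ} (j : Fin n) (f : (Fin n → Bool) → ℚ)
    (hf : ∀ x, f (Function.update x j (!(x j))) = - f x) :
    ∑ x : Fin n → Bool, f x = 0 := by
  refine Finset.sum_ninvolution (fun x => Function.update x j (!(x j)))
    (fun x => by rw [hf]; ring) (fun x _ hx => ?_) (fun x => mem_univ _) (fun x => ?_)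
  · have := congrFun hx j
    simp at this
  · funext k
    by_cases hk : k = j
    · subst hk; simp
    · simp [Function.update_of_ne hk]

lemma sum_sgn_single {n : ℕ} (j : Fin n) : ∑ x : Fin n → Bool, sgn (x j) = 0 := by
  refine sum_flip j _ (fun x => ?_); simp [sgn_not]

lemma sum_sgn_pair {n : ℕ} {j k : Fin n} (hjk : j ≠ k) :
    ∑ x : Fin n → Bool, sgn (x j) * sgn (x k) = 0 := by
  refine sum_flip j _ (fun x => ?_)
  rw [Function.update_self, Function.update_of_ne (Ne.symm hjk), sgn_not]; ring

lemma sum_one_cube {n : ℕ} : ∑ _x : Fin n → Bool, (1:ℚ) = (2:ℚ)^n := by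
  rw [Finset.sum_const, nsmul_eq_mul, mul_one, Finset.card_univ, Fintype.card_fun,
    Fintype.card_bool, Fintype.card_fin]
  push_cast; ring

lemma gate_sum {n : ℕ} (hn : 1 ≤ n) (f : (Fin n → Bool) → Bool) (j0 j1 : Fin n)
    (hj : j0 ≠ j1) (b0 b1 : Bool)
    (h : (∀ x, f x = (Bool.xor (x j0) b0 && Bool.xor (x j1) b1)) ∨
         (∀ x, f x = (Bool.xor (x j0) b0 || Bool.xor (x j1) b1))) :
    ∃ s : Bool, ∑ x : Fin n → Bool, sgn (f x) = sgn s * 2^(n-1) := by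
  have hpow : (2:ℚ)^n = 2 * 2^(n-1) := by
    conv_lhs => rw [show n = (n-1)+1 by omega]
    rw [pow_succ]; ring
  cases h with
  | inl hc =>
    refine ⟨false, ?_⟩
    have hpt : ∀ x : Fin n → Bool, sgn (f x) =
        (1 + sgn b0 * sgn (x j0) + sgn b1 * sgn (x j1)
          - (sgn b0 * sgn b1) * (sgn (x j0) * sgn (x j1))) / 2 := by
      intro x
      rw [hc x]
      cases x j0 <;> cases x j1 <;> cases b0 <;> cases b1 <;> norm_num [sgn]
    rw [Finset.sum_congr rfl (fun x _ => hpt x)]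
    rw [← Finset.sum_div]
    simp only [Finset.sum_add_distrib, Finset.sum_sub_distrib, ← Finset.mul_sum]
    rw [sum_one_cube, sum_sgn_single, sum_sgn_single, sum_sgn_pair hj, hpow]
    simp [sgn]
  | inr hc =>
    refine ⟨true, ?_⟩
    have hpt : ∀ x : Fin n → Bool, sgn (f x) =
        (-1 + sgn b0 * sgn (x j0) + sgn b1 * sgn (x j1)
          + (sgn b0 * sgn b1) * (sgn (x j0) * sgn (x j1))) / 2 := by
      intro x
      rw [hc x]
      cases x j0 <;> cases x j1 <;> cases b0 <;> cases b1 <;> norm_num [sgn]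
    rw [Finset.sum_congr rfl (fun x _ => hpt x)]
    rw [← Finset.sum_div]
    simp only [Finset.sum_add_distrib, Finset.sum_neg_distrib, ← Finset.mul_sum]
    rw [sum_sgn_single, sum_sgn_single, sum_sgn_pair hj, sum_one_cube, hpow]
    simp [sgn]
    ring

lemma sum_S {n : ℕ} (τ : Fin n → Bool) :
    ∑ a : Fin n → Bool, (∑ i, sgn (τ i) * sgn (a i)) = 0 := by
  rw [Finset.sum_comm]
  refine Finset.sum_eq_zero fun i _ => ?_
  rw [← Finset.mul_sum, sum_sgn_single, mul_zero]

lemma sum_S_sq {n : ℕ} (τ : Fin n → Bool) :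
    ∑ a : Fin n → Bool, (∑ i, sgn (τ i) * sgn (a i)) * (∑ i, sgn (τ i) * sgn (a i))
      = (n : ℚ) * 2^n := by
  have h1 : ∀ a : Fin n → Bool,
      (∑ i, sgn (τ i) * sgn (a i)) * (∑ i, sgn (τ i) * sgn (a i))
        = ∑ i, ∑ j, (sgn (τ i) * sgn (τ j)) * (sgn (a i) * sgn (a j)) := by
    intro a
    rw [Finset.sum_mul_sum]
    exact Finset.sum_congr rfl fun i _ => Finset.sum_congr rfl fun j _ => by ring
  rw [Finset.sum_congr rfl (fun a _ => h1 a), Finset.sum_comm]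
  have h2 : ∀ i : Fin n,
      (∑ a : Fin n → Bool, ∑ j, (sgn (τ i) * sgn (τ j)) * (sgn (a i) * sgn (a j)))
        = (2:ℚ)^n := by
    intro i
    rw [Finset.sum_comm]
    rw [Finset.sum_eq_single i (fun j _ hji => ?_) (fun h => absurd (mem_univ i) h)]
    · have : ∀ a : Fin n → Bool,
          (sgn (τ i) * sgn (τ i)) * (sgn (a i) * sgn (a i)) = 1 := by
        intro a; rw [sgn_sq, sgn_sq, one_mul]
      rw [Finset.sum_congr rfl (fun a _ => this a), sum_one_cube]
    · rw [← Finset.mul_sum, sum_sgn_pair (Ne.symm hji), mul_zero]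
  rw [Finset.sum_congr rfl (fun i _ => h2 i), Finset.sum_const, Finset.card_univ,
    Fintype.card_fin, nsmul_eq_mul]

lemma sum_fiber {n : ℕ} (F : (Fin n → Bool) → (Fin n → Bool)) (h : (Fin n → Bool) → ℚ) :
    ∑ x : Fin n → Bool, h (F x)
      = ∑ a : Fin n → Bool, ((Finset.univ.filter fun x => F x = a).card : ℚ) * h a := by
  rw [← Finset.sum_fiberwise' Finset.univ F h]
  exact Finset.sum_congr rfl fun a _ => by rw [Finset.sum_const, nsmul_eq_mul]

end ThreeImagesAux

open ThreeImagesAux Finset in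
theorem three_identical_images (n : ℕ) (hn : 3 < n)
    (F : (Fin n → Bool) → (Fin n → Bool)) (hF : isAndOrBN 2 F) :
    ∃ x1 x2 x3 : Fin n → Bool,
      x1 ≠ x2 ∧ x1 ≠ x3 ∧ x2 ≠ x3 ∧ F x1 = F x2 ∧ F x2 = F x3 := by
  by_contra hcon
  classical
  -- every fiber has at most 2 elements
  set N : (Fin n → Bool) → ℕ := fun a => (Finset.univ.filter fun x => F x = a).card with hNdef
  have hN2 : ∀ a, N a ≤ 2 := by
    intro a
    by_contra hlt
    push_neg at hlt
    obtain ⟨x1, x2, x3, h1, h2, h3, n12, n13, n23⟩ := Finset.two_lt_card_iff.mp hlt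
    simp only [Finset.mem_filter] at h1 h2 h3
    exact hcon ⟨x1, x2, x3, n12, n13, n23, by rw [h1.2, h2.2], by rw [h2.2, h3.2]⟩
  -- sign of each gate
  have hσex : ∀ i : Fin n, ∃ s : Bool,
      ∑ x : Fin n → Bool, sgn (F x i) = sgn s * 2^(n-1) := by
    intro i
    obtain ⟨idx, hinj, b, hc⟩ := hF i
    have hne : idx 0 ≠ idx 1 := fun h => absurd (hinj h) (by decide)
    refine gate_sum (by omega) (fun x => F x i) (idx 0) (idx 1) hne (b 0) (b 1) ?_
    cases hc with
    | inl h => exact Or.inl fun x => (h x).trans (inf_fin_two _)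
    | inr h => exact Or.inr fun x => (h x).trans (sup_fin_two _)
  choose σ hσ using hσex
  set P : ℚ := 2^(n-1) with hPdef
  have hpow : (2:ℚ)^n = 2 * P := by
    rw [hPdef]
    conv_lhs => rw [show n = (n-1)+1 by omega]
    rw [pow_succ]; ring
  set Nq : (Fin n → Bool) → ℚ := fun a => (N a : ℚ) with hNqdef
  set g : (Fin n → Bool) → ℚ :=
    fun a => 1 + (∑ i, sgn (σ i) * sgn (a i)) / 2 with hgdef
  have hfiber : ∀ h : (Fin n → Bool) → ℚ,
      ∑ x : Fin n → Bool, h (F x) = ∑ a : Fin n → Bool, Nq a * h a :=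
    fun h => sum_fiber F h
  -- ∑_x g (F x)
  have hSg : ∑ x : Fin n → Bool, g (F x) = 2*P + (n:ℚ)*P/2 := by
    simp only [hgdef]
    rw [Finset.sum_add_distrib, ← Finset.sum_div, sum_one_cube, Finset.sum_comm]
    have hin : ∀ i : Fin n,
        (∑ x : Fin n → Bool, sgn (σ i) * sgn (F x i)) = P := by
      intro i
      rw [← Finset.mul_sum, hσ i, ← mul_assoc, sgn_sq, one_mul]
    rw [Finset.sum_congr rfl (fun i _ => hin i), Finset.sum_const, Finset.card_univ,
      Fintype.card_fin, nsmul_eq_mul, hpow]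
  -- ∑_a g a * g a
  have hgg : ∑ a : Fin n → Bool, g a * g a = 2*P + (n:ℚ)*P/2 := by
    have hpt : ∀ a : Fin n → Bool, g a * g a =
        1 + (∑ i, sgn (σ i) * sgn (a i))
          + ((∑ i, sgn (σ i) * sgn (a i)) * (∑ i, sgn (σ i) * sgn (a i))) / 4 := by
      intro a; rw [hgdef]; ring
    rw [Finset.sum_congr rfl (fun a _ => hpt a)]
    rw [Finset.sum_add_distrib, Finset.sum_add_distrib, ← Finset.sum_div,
      sum_one_cube, sum_S, sum_S_sq, hpow]
    ring
  have hNg : ∑ a : Fin n → Bool, Nq a * g a = 2*P + (n:ℚ)*P/2 := by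
    rw [← hfiber g]; exact hSg
  -- ∑_a Nq a * Nq a ≤ 4P
  have hNN : ∑ a : Fin n → Bool, Nq a * Nq a ≤ 4*P := by
    rw [← hfiber Nq]
    have hle : ∀ x : Fin n → Bool, Nq (F x) ≤ 2 := by
      intro x
      have h2 := hN2 (F x)
      show ((N (F x) : ℚ)) ≤ 2
      exact_mod_cast h2
    calc ∑ x : Fin n → Bool, Nq (F x) ≤ ∑ _x : Fin n → Bool, (2:ℚ) :=
          Finset.sum_le_sum fun x _ => hle x
      _ = 2 * ∑ _x : Fin n → Bool, (1:ℚ) := by rw [Finset.mul_sum]; norm_num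
      _ = 4 * P := by rw [sum_one_cube, hpow]; ring
  -- Bessel-type identity
  have key1 : ∑ a : Fin n → Bool, (Nq a - g a)^2
      = (∑ a : Fin n → Bool, Nq a * Nq a) - (2*P + (n:ℚ)*P/2) := by
    have hpt : ∀ a : Fin n → Bool,
        (Nq a - g a)^2 = Nq a * Nq a - 2*(Nq a * g a) + g a * g a := by
      intro a; ring
    rw [Finset.sum_congr rfl (fun a _ => hpt a), Finset.sum_add_distrib,
      Finset.sum_sub_distrib, ← Finset.mul_sum, hNg, hgg]
    ring
  have key2 : (Nq σ - g σ)^2 ≤ ∑ a : Fin n → Bool, (Nq a - g a)^2 :=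
    Finset.single_le_sum (f := fun a => (Nq a - g a)^2) (fun a _ => sq_nonneg _)
      (Finset.mem_univ σ)
  have hgσ : g σ = 1 + (n:ℚ)/2 := by
    show 1 + (∑ i : Fin n, sgn (σ i) * sgn (σ i)) / 2 = 1 + (n:ℚ)/2
    have : ∀ i : Fin n, sgn (σ i) * sgn (σ i) = 1 := fun i => sgn_sq _
    rw [Finset.sum_congr rfl (fun i _ => this i), Finset.sum_const, Finset.card_univ,
      Fintype.card_fin, nsmul_eq_mul, mul_one]
  -- final contradiction
  have hn4 : (4:ℚ) ≤ (n:ℚ) := by exact_mod_cast (by omega : 4 ≤ n)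
  have hPpos : 0 < P := by rw [hPdef]; positivity
  have hNσle : Nq σ ≤ 2 := by
    have h2 := hN2 σ
    show ((N σ : ℚ)) ≤ 2
    exact_mod_cast h2
  have hNσ0 : 0 ≤ Nq σ := by
    show (0:ℚ) ≤ ((N σ : ℚ))
    positivity
  have e1 : ((n:ℚ)/2 - 1)^2 ≤ (Nq σ - g σ)^2 := by
    rw [hgσ]
    nlinarith [mul_nonneg (by linarith : (0:ℚ) ≤ 2 - Nq σ)
      (by linarith : (0:ℚ) ≤ (n:ℚ) - Nq σ)]
  have e2 : (1:ℚ) ≤ ((n:ℚ)/2 - 1)^2 := by nlinarith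
  have e3 : 4*P - (2*P + (n:ℚ)*P/2) ≤ 0 := by nlinarith
  have hfalse : (1:ℚ) ≤ 0 := by
    calc (1:ℚ) ≤ ((n:ℚ)/2 - 1)^2 := e2
      _ ≤ (Nq σ - g σ)^2 := e1
      _ ≤ ∑ a : Fin n → Bool, (Nq a - g a)^2 := key2
      _ = (∑ a : Fin n → Bool, Nq a * Nq a) - (2*P + (n:ℚ)*P/2) := key1
      _ ≤ 4*P - (2*P + (n:ℚ)*P/2) := by linarith
      _ ≤ 0 := e3
  norm_num at hfalse
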